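/- For every integer k ≥ 3 and every ε > 0, there exists N such that for every n ≥ N there exists a digraph D on n vertices in which the number of k-element vertex subsets inducing a copy of the directed star S⃗_k is at least (α_k − ε)·C(n,k), where α_k = sup_{x ∈ [0,1)} k·x·(1−x)^{k−1}/(1−x^k). -/

import Mathlib

/-- The number of `k`-element vertex subsets of the digraph `D` (given by its arc
relation) that induce a copy of the directed star `S⃗ₖ`. -/
noncomputable def starCount (k : ℕ) {V : Type} [Fintype V] (D : V → V → Prop) : ℕ :=
  {S : Finset V | S.card = k ∧
    ∃ v ∈ S, ∀ u ∈ S, ∀ w ∈ S, (D u w ↔ (u = v ∧ w ≠ v))}.ncard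

/-- `α_k = sup_{x ∈ [0,1)} k·x·(1−x)^{k−1}/(1−x^k)`. -/
noncomputable def alphaStar (k : ℕ) : ℝ :=
  sSup ((fun x : ℝ => (k : ℝ) * x * (1 - x) ^ (k - 1) / (1 - x ^ k)) '' Set.Ico 0 1)

open Finset Filter Topology

lemma card_val_lt_filter (n c : ℕ) (h : c ≤ n) :
    (Finset.univ.filter (fun v : Fin n => (v : ℕ) < c)).card = c := by
  classical
  rw [← Finset.card_range c]
  apply Finset.card_bij (fun (v : Fin n) _ => (v : ℕ))
  · intro a ha
    simp only [Finset.mem_filter] at ha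
    simpa using ha.2
  · intro a _ b _ hab
    exact Fin.val_injective hab
  · intro b hb
    simp only [Finset.mem_range] at hb
    exact ⟨⟨b, lt_of_lt_of_le hb h⟩, by simp [hb], rfl⟩

lemma star_count_lower (n k t : ℕ) (hk : 3 ≤ k) (ℓ : Fin n → ℕ) :
    ∑ j ∈ Finset.range t,
      (Finset.univ.filter (fun v : Fin n => j < ℓ v)).card *
        Nat.choose (Finset.univ.filter (fun v : Fin n => ℓ v = j)).card (k - 1)
      ≤ starCount k (fun u w => ℓ w < ℓ u) := by
  classical
  set P : ℕ → Finset (Fin n) := fun j => Finset.univ.filter (fun v => ℓ v = j) with hP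
  set Q : ℕ → Finset (Fin n) := fun j => Finset.univ.filter (fun v => j < ℓ v) with hQ
  set Stars : ℕ → Finset (Finset (Fin n)) := fun j =>
    ((Q j) ×ˢ ((P j).powersetCard (k-1))).image (fun p => insert p.1 p.2) with hStars
  have hQmem : ∀ j (v : Fin n), v ∈ Q j ↔ j < ℓ v := by
    intro j v; simp [hQ]
  have hPmem : ∀ j (v : Fin n), v ∈ P j ↔ ℓ v = j := by
    intro j v; simp [hP]
  -- structure of members
  have hstruct : ∀ j, ∀ S ∈ Stars j, ∃ v T, S = insert v T ∧ j < ℓ v ∧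
      (∀ w ∈ T, ℓ w = j) ∧ T.card = k - 1 ∧ v ∉ T := by
    intro j S hS
    simp only [hStars, Finset.mem_image, Finset.mem_product, Finset.mem_powersetCard] at hS
    obtain ⟨⟨v, T⟩, ⟨hv, hT, hTcard⟩, rfl⟩ := hS
    refine ⟨v, T, rfl, (hQmem j v).1 hv, fun w hw => (hPmem j w).1 (hT hw), hTcard, ?_⟩
    intro hvT
    have := (hPmem j v).1 (hT hvT)
    have := (hQmem j v).1 hv
    omega
  -- each member is a star of size k
  have hmem : ∀ j, ∀ S ∈ Stars j, S.card = k ∧ ∃ v ∈ S, ∀ u ∈ S, ∀ w ∈ S,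
      (ℓ w < ℓ u ↔ (u = v ∧ w ≠ v)) := by
    intro j S hS
    obtain ⟨v, T, rfl, hv, hT, hTcard, hvT⟩ := hstruct j S hS
    constructor
    · rw [Finset.card_insert_of_notMem hvT, hTcard]; omega
    · refine ⟨v, Finset.mem_insert_self v T, ?_⟩
      intro u hu w hw
      rcases Finset.mem_insert.1 hu with rfl | hu
      · rcases Finset.mem_insert.1 hw with rfl | hw
        · simp
        · have hw' := hT w hw
          have hwv : w ≠ u := by
            intro h; subst h; omega
          constructor
          · intro _; exact ⟨rfl, hwv⟩
          · intro _; omega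
      · have hu' := hT u hu
        have huv : u ≠ v := by intro h; subst h; omega
        rcases Finset.mem_insert.1 hw with rfl | hw
        · constructor
          · intro h; omega
          · rintro ⟨h, _⟩; exact absurd h huv
        · have hw' := hT w hw
          constructor
          · intro h; omega
          · rintro ⟨h, _⟩; exact absurd h huv
  -- cardinality of each Stars j
  have hcard : ∀ j, (Stars j).card = (Q j).card * Nat.choose (P j).card (k-1) := by
    intro j
    rw [hStars]
    rw [Finset.card_image_of_injOn, Finset.card_product, Finset.card_powersetCard]
    rintro ⟨v, T⟩ hp ⟨v', T'⟩ hp' heq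
    simp only [Finset.mem_coe, Finset.mem_product, Finset.mem_powersetCard] at hp hp'
    obtain ⟨hv, hT, hTc⟩ := hp
    obtain ⟨hv', hT', hTc'⟩ := hp'
    simp only at heq
    have hvv' : v = v' := by
      have : v' ∈ insert v T := by rw [heq]; exact Finset.mem_insert_self _ _
      rcases Finset.mem_insert.1 this with h | h
      · exact h.symm
      · have := (hPmem j v').1 (hT h)
        have := (hQmem j v').1 hv'
        omega
    subst hvv'
    have hvnT : v ∉ T := by
      intro h
      have := (hPmem j v).1 (hT h)
      have := (hQmem j v).1 hv
      omega
    have hvnT' : v ∉ T' := by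
      intro h
      have := (hPmem j v).1 (hT' h)
      have := (hQmem j v).1 hv'
      omega
    have : T = T' := by
      have h1 : (insert v T).erase v = T := Finset.erase_insert hvnT
      have h2 : (insert v T').erase v = T' := Finset.erase_insert hvnT'
      rw [← h1, ← h2, heq]
    simp [this]
  -- disjointness
  have hdisj : ∀ j ∈ Finset.range t, ∀ j' ∈ Finset.range t, j ≠ j' →
      Disjoint (Stars j) (Stars j') := by
    intro j _ j' _ hjj'
    rw [Finset.disjoint_left]
    intro S hS hS'
    obtain ⟨v, T, rfl, hv, hT, hTcard, hvT⟩ := hstruct j S hS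
    obtain ⟨v', T', heq, hv', hT', hTcard', hvT'⟩ := hstruct j' _ hS'
    have h2 : 1 < T.card := by omega
    obtain ⟨a, ha, b, hb, hab⟩ := Finset.one_lt_card.1 h2
    have haS : a ∈ insert v' T' := by rw [← heq]; exact Finset.mem_insert_of_mem ha
    have hbS : b ∈ insert v' T' := by rw [← heq]; exact Finset.mem_insert_of_mem hb
    have hia := hT a ha
    have hib := hT b hb
    rcases Finset.mem_insert.1 haS with rfl | haT'
    · rcases Finset.mem_insert.1 hbS with rfl | hbT'
      · exact hab rfl
      · have := hT' b hbT'; omega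
    · have := hT' a haT'; omega
  -- assemble
  have hsum : ∑ j ∈ Finset.range t, (Q j).card * Nat.choose (P j).card (k-1)
      = ((Finset.range t).biUnion Stars).card := by
    rw [Finset.card_biUnion hdisj]
    exact Finset.sum_congr rfl (fun j _ => (hcard j).symm)
  rw [hsum]
  have hsub : (((Finset.range t).biUnion Stars : Finset (Finset (Fin n))) : Set (Finset (Fin n)))
      ⊆ {S : Finset (Fin n) | S.card = k ∧
        ∃ v ∈ S, ∀ u ∈ S, ∀ w ∈ S, ((fun u w => ℓ w < ℓ u) u w ↔ (u = v ∧ w ≠ v))} := by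
    intro S hS
    simp only [Finset.coe_biUnion, Set.mem_iUnion, Finset.mem_coe, Finset.mem_range] at hS
    obtain ⟨j, _, hSj⟩ := hS
    exact hmem j S hSj
  calc ((Finset.range t).biUnion Stars).card
      = (((Finset.range t).biUnion Stars : Finset (Finset (Fin n))) : Set (Finset (Fin n))).ncard := (Set.ncard_coe_finset _).symm
    _ ≤ _ := Set.ncard_le_ncard hsub (Set.toFinite _)


theorem star_inducibility_lower (k : ℕ) (hk : 3 ≤ k) (ε : ℝ) (hε : 0 < ε) :
    ∃ N : ℕ, ∀ n : ℕ, N ≤ n → ∃ D : Fin n → Fin n → Prop,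
      (alphaStar k - ε) * (n.choose k : ℝ) ≤ (starCount k D : ℝ) := by
  by_cases hα : alphaStar k - ε ≤ 0
  · refine ⟨0, fun n _ => ⟨fun _ _ => False, ?_⟩⟩
    exact (mul_nonpos_of_nonpos_of_nonneg hα (Nat.cast_nonneg _)).trans (Nat.cast_nonneg _)
  push_neg at hα
  set α := alphaStar k with hαdef
  set f : ℝ → ℝ := fun x => (k : ℝ) * x * (1 - x) ^ (k - 1) / (1 - x ^ k) with hf
  have hαeq : α = sSup (f '' Set.Ico (0:ℝ) 1) := rfl
  have hne : (f '' Set.Ico (0:ℝ) 1).Nonempty :=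
    ⟨f 0, 0, ⟨le_refl _, zero_lt_one⟩, rfl⟩
  have hlt : α - ε/2 < sSup (f '' Set.Ico (0:ℝ) 1) := by
    rw [← hαeq]; linarith
  obtain ⟨b, ⟨x, hx, rfl⟩, hfx⟩ := exists_lt_of_lt_csSup hne hlt
  have hfxpos : 0 < f x := by linarith
  have hxpos : 0 < x := by
    rcases eq_or_lt_of_le hx.1 with h | h
    · exfalso
      have : f x = 0 := by rw [hf, ← h]; simp
      linarith
    · exact h
  have hx1 : x < 1 := hx.2
  have hxk1 : x ^ k < 1 := pow_lt_one₀ hx.1 hx1 (by omega)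
  have hxkpos : 0 < x ^ k := pow_pos hxpos k
  have hden : 0 < 1 - x ^ k := by linarith
  -- choose t
  obtain ⟨t, ht⟩ := exists_pow_lt_of_lt_one (show (0:ℝ) < ε/2 / f x by positivity) hxk1
  set y : ℕ → ℝ := fun j => x ^ j * (1 - x) with hy
  set c : ℝ := k * ∑ j ∈ Finset.range t, x ^ (j+1) * (y j) ^ (k-1) with hc
  have hceq : c = f x * (1 - (x^k)^t) := by
    have h1 : ∀ j ∈ Finset.range t,
        x ^ (j+1) * (y j) ^ (k-1) = x * (1-x)^(k-1) * (x^k)^j := by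
      intro j _
      rw [hy]
      simp only
      rw [mul_pow, ← pow_mul, ← mul_assoc, ← pow_add, ← pow_mul]
      have hkid : j + 1 + j * (k - 1) = k * j + 1 := by
        zify [show (1:ℕ) ≤ k from by omega]
        ring
      rw [hkid, pow_succ]
      ring
    rw [hc, Finset.sum_congr rfl h1, ← Finset.mul_sum,
      geom_sum_eq (ne_of_lt hxk1), hf]
    simp only
    have hne1 : x ^ k - 1 ≠ 0 := by linarith
    have hne2 : (1:ℝ) - x ^ k ≠ 0 := by linarith
    field_simp
    ring
  have hcgt : α - ε < c := by
    rw [hceq]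
    have h2 : f x * (x^k)^t < ε/2 := by
      rw [lt_div_iff₀ hfxpos] at ht
      nlinarith
    nlinarith
  -- eventually conditions
  set G : ℕ → ℝ := fun n => (k:ℝ) * ∑ j ∈ Finset.range t, x ^ (j+1) * (y j - k / n) ^ (k-1)
    with hG
  have hGtend : Tendsto G atTop (𝓝 c) := by
    rw [hc]
    apply Tendsto.const_mul
    apply tendsto_finset_sum
    intro j _
    have h1 : Tendsto (fun n : ℕ => y j - (k:ℝ)/n) atTop (𝓝 (y j)) := by
      have h0 := tendsto_const_div_atTop_nhds_zero_nat (k:ℝ)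
      simpa using tendsto_const_nhds.sub h0
    exact (h1.pow _).const_mul _
  have hE1 : ∀ᶠ n : ℕ in atTop, α - ε < G n := hGtend.eventually (eventually_gt_nhds hcgt)
  have hE2 : ∀ᶠ n : ℕ in atTop, ∀ j ∈ Finset.range t, (k:ℝ) ≤ y j * n := by
    rw [eventually_all_finset]
    intro j _
    have h1x : (0:ℝ) < 1 - x := by linarith
    have hyj : 0 < y j := by rw [hy]; positivity
    exact (tendsto_natCast_atTop_atTop.const_mul_atTop hyj).eventually_ge_atTop _
  have hE3 : ∀ᶠ n : ℕ in atTop, 1 ≤ n := eventually_ge_atTop 1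
  have hEall := (hE1.and hE2).and hE3
  rw [eventually_atTop] at hEall
  obtain ⟨N, hN⟩ := hEall
  refine ⟨N, fun n hn => ?_⟩
  obtain ⟨⟨hGn, hYn⟩, hn1⟩ := hN n hn
  have hnpos : (0:ℝ) < n := by exact_mod_cast hn1
  -- the construction
  set m : ℕ → ℕ := fun j => ⌈x ^ j * n⌉₊ with hm
  have hmanti : Antitone m := by
    apply antitone_nat_of_succ_le
    intro j
    apply Nat.ceil_le_ceil
    have h1 : x^(j+1) ≤ x^j := pow_le_pow_of_le_one hx.1 hx1.le (by omega)
    exact mul_le_mul_of_nonneg_right h1 hnpos.le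
  have hml : ∀ j, x ^ j * n ≤ m j := fun j => Nat.le_ceil _
  have hmu : ∀ j, (m j : ℝ) < x ^ j * n + 1 := by
    intro j
    apply Nat.ceil_lt_add_one
    positivity
  have hmn : ∀ j, m j ≤ n := by
    intro j
    rw [hm]
    simp only
    rw [Nat.ceil_le]
    calc x^j * n ≤ 1 * n := by
          apply mul_le_mul_of_nonneg_right _ hnpos.le
          exact pow_le_one₀ hx.1 hx1.le
      _ = n := one_mul _
  have hm0 : m 0 = n := by rw [hm]; simp
  have hP0 : ∀ v : Fin n, (v:ℕ) < m 0 := by intro v; rw [hm0]; exact v.isLt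
  obtain ⟨ℓ, hiff⟩ : ∃ ℓ : Fin n → ℕ, ∀ v : Fin n, ∀ j, j ≤ t →
      (j ≤ ℓ v ↔ (v:ℕ) < m j) := by
    refine ⟨fun v => Nat.findGreatest (fun j => (v:ℕ) < m j) t, ?_⟩
    intro v j hj
    constructor
    · intro hjl
      have hspec : (v:ℕ) < m (Nat.findGreatest (fun j => (v:ℕ) < m j) t) :=
        Nat.findGreatest_spec (P := fun j => (v:ℕ) < m j) (Nat.zero_le t) (hP0 v)
      exact lt_of_lt_of_le hspec (hmanti hjl)
    · intro hvm
      exact Nat.le_findGreatest hj hvm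
  have hQcard : ∀ j < t, (Finset.univ.filter (fun v : Fin n => j < ℓ v)).card = m (j+1) := by
    intro j hj
    have heq : (Finset.univ.filter (fun v : Fin n => j < ℓ v)) =
        (Finset.univ.filter (fun v : Fin n => (v:ℕ) < m (j+1))) := by
      apply Finset.filter_congr
      intro v _
      exact hiff v (j+1) (by omega)
    rw [heq, card_val_lt_filter _ _ (hmn _)]
  have hPcard : ∀ j < t,
      (Finset.univ.filter (fun v : Fin n => ℓ v = j)).card = m j - m (j+1) := by
    intro j hj
    have hss : (Finset.univ.filter (fun v : Fin n => (v:ℕ) < m (j+1))) ⊆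
        (Finset.univ.filter (fun v : Fin n => (v:ℕ) < m j)) := by
      intro v hv
      simp only [Finset.mem_filter, Finset.mem_univ, true_and] at hv ⊢
      exact lt_of_lt_of_le hv (hmanti (by omega))
    have heq : (Finset.univ.filter (fun v : Fin n => ℓ v = j)) =
        (Finset.univ.filter (fun v : Fin n => (v:ℕ) < m j)) \
        (Finset.univ.filter (fun v : Fin n => (v:ℕ) < m (j+1))) := by
      ext v
      simp only [Finset.mem_filter, Finset.mem_sdiff, Finset.mem_univ, true_and]
      have h1 := hiff v j (by omega)
      have h2 := hiff v (j+1) (by omega)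
      constructor
      · intro h
        exact ⟨h1.1 (by omega), fun hc => by have := h2.2 hc; omega⟩
      · rintro ⟨ha, hb⟩
        have hj1 := h1.2 ha
        have hj2 : ¬ (j+1 ≤ ℓ v) := fun hc => hb (h2.1 hc)
        omega
    rw [heq, Finset.card_sdiff_of_subset hss, card_val_lt_filter _ _ (hmn _),
      card_val_lt_filter _ _ (hmn _)]
  refine ⟨fun u w => ℓ w < ℓ u, ?_⟩
  have hnat : ∑ j ∈ Finset.range t, m (j+1) * Nat.choose (m j - m (j+1)) (k-1)
      ≤ starCount k (fun u w => ℓ w < ℓ u) := by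
    calc ∑ j ∈ Finset.range t, m (j+1) * Nat.choose (m j - m (j+1)) (k-1)
        = ∑ j ∈ Finset.range t, (Finset.univ.filter (fun v : Fin n => j < ℓ v)).card *
            Nat.choose (Finset.univ.filter (fun v : Fin n => ℓ v = j)).card (k-1) := by
          refine Finset.sum_congr rfl (fun j hj => ?_)
          rw [hQcard j (Finset.mem_range.1 hj), hPcard j (Finset.mem_range.1 hj)]
      _ ≤ _ := star_count_lower n k t hk ℓ
  have hcast : ((∑ j ∈ Finset.range t, m (j+1) * Nat.choose (m j - m (j+1)) (k-1) : ℕ) : ℝ)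
      ≤ (starCount k (fun u w => ℓ w < ℓ u) : ℝ) := by exact_mod_cast hnat
  refine le_trans ?_ hcast
  push_cast
  -- termwise bound
  have hterm : ∀ j ∈ Finset.range t,
      x^(j+1) * (y j - (k:ℝ)/n)^(k-1) * ((n:ℝ)^k / (k-1).factorial)
      ≤ (m (j+1) : ℝ) * ((m j - m (j+1)).choose (k-1) : ℝ) := by
    intro j hj
    rw [Finset.mem_range] at hj
    set a : ℕ := m j - m (j+1) with ha
    have hle : m (j+1) ≤ m j := hmanti (by omega)
    have haR : (a:ℝ) = (m j : ℝ) - (m (j+1) : ℝ) := by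
      rw [ha]; push_cast [hle]; ring
    have hyn : (k:ℝ) ≤ y j * n := hYn j (Finset.mem_range.2 hj)
    have hyexp : y j * n = x^j * n - x^(j+1) * n := by
      rw [hy]; simp only; rw [pow_succ]; ring
    have halb : y j * n - 1 ≤ (a:ℝ) := by
      have h1 := hml j
      have h2 := hmu (j+1)
      rw [haR, hyexp]
      linarith
    have hkk : (3:ℝ) ≤ k := by exact_mod_cast hk
    have hk1a : k - 1 ≤ a := by
      have h1 : ((k:ℝ)) - 1 ≤ (a:ℝ) := by linarith
      have h2 : ((k-1:ℕ):ℝ) ≤ (a:ℝ) := by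
        push_cast [show (1:ℕ) ≤ k by omega]
        linarith
      exact_mod_cast h2
    set b : ℕ := a + 1 - (k-1) with hb
    have hbR : (b:ℝ) = (a:ℝ) + 1 - ((k:ℝ) - 1) := by
      rw [hb]
      push_cast [show k - 1 ≤ a + 1 by omega, show (1:ℕ) ≤ k by omega]
      ring
    have hbge : y j * n - (k:ℝ) ≤ (b:ℝ) := by rw [hbR]; linarith
    have h0 : (0:ℝ) ≤ y j - (k:ℝ)/n := by
      rw [sub_nonneg, div_le_iff₀ hnpos]
      linarith
    have hprod : (y j - (k:ℝ)/n) * n = y j * n - k := by field_simp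
    have hkey : ((y j - (k:ℝ)/n) * n)^(k-1) ≤ (b:ℝ)^(k-1) := by
      apply pow_le_pow_left₀ (mul_nonneg h0 hnpos.le)
      rw [hprod]; exact hbge
    have hchoose : (b:ℝ)^(k-1) / ((k-1).factorial : ℝ) ≤ (a.choose (k-1) : ℝ) := by
      have h := Nat.pow_le_choose (α := ℝ) (k-1) a
      rw [hb]
      push_cast at h ⊢
      convert h using 3
    have hmj1 : x^(j+1) * n ≤ (m (j+1) : ℝ) := hml (j+1)
    have hnk : (n:ℝ)^k = (n:ℝ) * (n:ℝ)^(k-1) := by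
      rw [← pow_succ']
      congr 1
      omega
    have hfpos : (0:ℝ) < ((k-1).factorial : ℝ) := by
      exact_mod_cast (k-1).factorial_pos
    calc x^(j+1) * (y j - (k:ℝ)/n)^(k-1) * ((n:ℝ)^k / (k-1).factorial)
        = (x^(j+1) * n) * (((y j - (k:ℝ)/n) * n)^(k-1) / (k-1).factorial) := by
          rw [hnk, mul_pow]; ring
      _ ≤ (m (j+1) : ℝ) * ((b:ℝ)^(k-1) / (k-1).factorial) := by
          apply mul_le_mul hmj1 _ (by positivity) (Nat.cast_nonneg _)
          exact div_le_div_of_nonneg_right hkey hfpos.le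
      _ ≤ (m (j+1) : ℝ) * (a.choose (k-1) : ℝ) :=
          mul_le_mul_of_nonneg_left hchoose (Nat.cast_nonneg _)
  have hsumineq :
      ∑ j ∈ Finset.range t, x^(j+1) * (y j - (k:ℝ)/n)^(k-1) * ((n:ℝ)^k / (k-1).factorial)
      ≤ ∑ j ∈ Finset.range t, (m (j+1) : ℝ) * ((m j - m (j+1)).choose (k-1) : ℝ) :=
    Finset.sum_le_sum hterm
  have hfact : (k.factorial : ℝ) = k * ((k-1).factorial : ℝ) := by
    exact_mod_cast (Nat.mul_factorial_pred (show k ≠ 0 by omega)).symm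
  have hGsplit : G n * ((n:ℝ)^k / k.factorial) =
      ∑ j ∈ Finset.range t, x^(j+1) * (y j - (k:ℝ)/n)^(k-1) * ((n:ℝ)^k / (k-1).factorial) := by
    rw [hG]
    simp only
    rw [Finset.mul_sum, Finset.sum_mul]
    refine Finset.sum_congr rfl (fun j _ => ?_)
    have hf1 : ((k-1).factorial : ℝ) ≠ 0 := by positivity
    have hf2 : (k.factorial : ℝ) ≠ 0 := by positivity
    rw [hfact]
    field_simp
  have hchoosen : ((n.choose k : ℕ) : ℝ) ≤ (n:ℝ)^k / k.factorial :=
    Nat.choose_le_pow_div k n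
  calc (α - ε) * ((n.choose k : ℕ) : ℝ)
      ≤ (α - ε) * ((n:ℝ)^k / k.factorial) :=
        mul_le_mul_of_nonneg_left hchoosen (le_of_lt hα)
    _ ≤ G n * ((n:ℝ)^k / k.factorial) := by
        apply mul_le_mul_of_nonneg_right (le_of_lt hGn)
        positivity
    _ = _ := hGsplit
    _ ≤ _ := hsumineq
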